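/- Let G be a finite abelian group of order n and, for a function k = k(n) with 4 ≤ k ≤ ⌊n/2⌋ + 1, let N(k, b) be the number of k-element subsets of G whose elements sum to b. Then lim_{n→∞} (min_{b∈G} N(k, b)) / (max_{b∈G} N(k, b)) = 1. Precisely: for every ε > 0 there exists N₀ such that for every finite abelian group G of order n ≥ N₀ and every integer k with 4 ≤ k ≤ ⌊n/2⌋ + 1, min_b N(k,b) / max_b N(k,b) > 1 − ε. -/

import Mathlib

set_option linter.unusedSectionVars false
set_option maxHeartbeats 1000000


open Finset

lemma my_vandermonde (a b c e : ℕ) : a.choose c * b.choose e ≤ (a + b).choose (c + e) := by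
  rw [Nat.add_choose_eq]
  exact Finset.single_le_sum (f := fun ij : ℕ × ℕ => a.choose ij.1 * b.choose ij.2)
    (fun i _ => Nat.zero_le _) (a := ((c, e) : ℕ × ℕ)) (Finset.HasAntidiagonal.mem_antidiagonal.mpr rfl)

lemma my_choose_two_le {m j : ℕ} (h2 : 2 ≤ j) (hj : j + 2 ≤ m) : m.choose 2 ≤ m.choose j := by
  have mono : ∀ r, 2 ≤ r → r ≤ m / 2 → m.choose 2 ≤ m.choose r := by
    intro r h2r
    induction r, h2r using Nat.le_induction with
    | base => intro _; exact le_rfl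
    | succ r hr ih =>
      intro hle
      have hr2 : r < m / 2 := lt_of_lt_of_le (Nat.lt_succ_self r) hle
      exact (ih hr2.le).trans (Nat.choose_le_succ_of_lt_half_left hr2)
  rcases le_or_gt j (m / 2) with h | h
  · exact mono j h2 h
  · have hjm : j ≤ m := by omega
    rw [← Nat.choose_symm hjm]
    exact mono (m - j) (by omega) (by omega)

lemma my_key_nat (T n k d : ℕ) (hn : 8 * T + 100 ≤ n) (h4 : 4 ≤ k) (hk : k ≤ n / 2 + 1)
    (hd2 : 2 ≤ d) (hdn : d ∣ n) (hdk : d ∣ (n - k)) :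
    T * n * Nat.choose (n / d) ((n - k) / d) ≤ n.choose k := by
  have hkn : k ≤ n := by omega
  obtain ⟨u, hu⟩ := hdn
  obtain ⟨v, hv⟩ := hdk
  have hd0 : 0 < d := by omega
  have hun : n / d = u := by rw [hu]; exact Nat.mul_div_cancel_left u hd0
  have hvn : (n - k) / d = v := by rw [hv]; exact Nat.mul_div_cancel_left v hd0
  have hvu : v ≤ u := by
    by_contra h
    push_neg at h
    have : n < n - k := by
      calc n = d * u := hu
      _ < d * v := (Nat.mul_lt_mul_left hd0).mpr h
      _ = n - k := hv.symm
    omega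
  set w := u - v with hwdef
  have hw : d * w = k := by
    have h1 : d * w + d * v = d * u := by rw [← Nat.mul_add]; congr 1; omega
    omega
  have hu2 : u ≤ n / 2 := by rw [← hun]; exact Nat.div_le_div_left hd2 (by omega)
  have hv2 : v ≤ (n - k) / 2 := by rw [← hvn]; exact Nat.div_le_div_left hd2 (by omega)
  have hw2 : w ≤ k / 2 := by
    have h1 : k / d = w := by rw [← hw]; exact Nat.mul_div_cancel_left w hd0
    rw [← h1]; exact Nat.div_le_div_left hd2 (by omega)
  set m' := n - u with hm'
  set j' := (n - k) - v with hj'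
  have hvand : u.choose v * m'.choose j' ≤ n.choose (n - k) := by
    have h := my_vandermonde u m' v j'
    have h1 : u + m' = n := by omega
    have h2 : v + j' = n - k := by omega
    rwa [h1, h2] at h
  have hsymm : n.choose (n - k) = n.choose k := Nat.choose_symm hkn
  have hj'2 : 2 ≤ j' := by omega
  have hj'm : j' + 2 ≤ m' := by omega
  have hmono := my_choose_two_le hj'2 hj'm
  have hm'big : 4 * T + 50 ≤ m' := by omega
  have hTn : T * n ≤ m'.choose 2 := by
    rw [Nat.choose_two_right]
    rw [Nat.le_div_iff_mul_le (by norm_num : 0 < 2)]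
    have h1 : n ≤ 2 * m' := by omega
    have h2 : T * n * 2 ≤ (4 * T) * m' := by
      calc T * n * 2 ≤ T * (2 * m') * 2 :=
            Nat.mul_le_mul_right 2 (Nat.mul_le_mul_left T h1)
      _ = (4 * T) * m' := by ring
    have h3 : (4 * T) * m' ≤ (m' - 1) * m' := Nat.mul_le_mul_right m' (by omega)
    calc T * n * 2 ≤ (4 * T) * m' := h2
    _ ≤ (m' - 1) * m' := h3
    _ = m' * (m' - 1) := by ring
  calc T * n * Nat.choose (n / d) ((n - k) / d) = T * n * u.choose v := by rw [hun, hvn]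
  _ ≤ m'.choose 2 * u.choose v := Nat.mul_le_mul_right _ hTn
  _ ≤ m'.choose j' * u.choose v := Nat.mul_le_mul_right _ hmono
  _ = u.choose v * m'.choose j' := by ring
  _ ≤ n.choose (n - k) := hvand
  _ = n.choose k := hsymm


open Finset Polynomial

variable {G : Type} [AddCommGroup G] [Fintype G] [DecidableEq G]

lemma my_addChar_map_sum (ψ : AddChar G ℂ) (S : Finset G) :
    ψ (∑ s ∈ S, s) = ∏ s ∈ S, ψ s := by
  induction S using Finset.cons_induction with
  | empty => simp
  | cons a S ha ih => rw [Finset.sum_cons, Finset.prod_cons, AddChar.map_add_eq_mul, ih]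

lemma my_fiber_card (ψ : AddChar G ℂ) (a : G) :
    #(univ.filter fun g => ψ g = ψ a) = #(univ.filter fun g => ψ g = 1) := by
  apply Finset.card_bij (fun g _ => g - a)
  · intro g hg
    simp only [mem_filter, mem_univ, true_and] at hg ⊢
    rw [AddChar.map_sub_eq_div, hg, div_self]
    have := ψ.norm_apply a
    intro h; rw [h] at this; simp at this
  · intro g₁ h₁ g₂ h₂ h
    simpa using congrArg (· + a) h
  · intro g hg
    simp only [mem_filter, mem_univ, true_and] at hg ⊢
    refine ⟨g + a, ?_, by abel⟩
    rw [AddChar.map_add_eq_mul, hg, one_mul]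

lemma my_coeff_pow (e : ℂ) (d m r : ℕ) (hd : 0 < d) :
    ((X ^ d + C e) ^ m).coeff r =
      if d ∣ r ∧ r / d ≤ m then e ^ (m - r / d) * (m.choose (r / d) : ℂ) else 0 := by
  rw [add_pow, finset_sum_coeff]
  have hterm : ∀ j ∈ Finset.range (m + 1),
      ((X ^ d) ^ j * C e ^ (m - j) * ((m.choose j : ℕ) : ℂ[X])).coeff r =
        if r = d * j then e ^ (m - j) * (m.choose j : ℂ) else 0 := by
    intro j hj
    rw [← pow_mul, ← C_pow, ← Polynomial.C_eq_natCast, mul_assoc, ← C_mul,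
      mul_comm (X ^ (d * j)), coeff_C_mul, coeff_X_pow]
    by_cases h : r = d * j <;> simp [h]
  rw [Finset.sum_congr rfl hterm]
  by_cases h : d ∣ r ∧ r / d ≤ m
  · obtain ⟨⟨q, rfl⟩, hq⟩ := h
    have hqd : d * q / d = q := Nat.mul_div_cancel_left q hd
    rw [hqd] at hq ⊢
    rw [Finset.sum_eq_single q]
    · simp [hq, dvd_mul_right]
    · intro j hj hne
      rw [if_neg]
      intro hcontra
      exact hne (Nat.eq_of_mul_eq_mul_left hd hcontra).symm
    · intro hq'
      exact absurd (Finset.mem_range.mpr (by omega)) hq'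
  · rw [if_neg h]
    apply Finset.sum_eq_zero
    intro j hj
    rw [if_neg]
    intro hcontra
    apply h
    subst hcontra
    exact ⟨⟨j, rfl⟩, by
      rw [Nat.mul_div_cancel_left j hd]
      exact Nat.lt_succ_iff.mp (Finset.mem_range.mp hj)⟩

lemma my_E_eq (ψ : AddChar G ℂ) (hψ : ψ ≠ 0) (k : ℕ) (hk : k ≤ Fintype.card G) :
    ∃ d m : ℕ, 2 ≤ d ∧ Fintype.card G = d * m ∧
      (‖∑ S ∈ Finset.univ.powersetCard k, ∏ s ∈ S, ψ s‖ = 0 ∨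
        (d ∣ (Fintype.card G - k) ∧
          ‖∑ S ∈ Finset.univ.powersetCard k, ∏ s ∈ S, ψ s‖ =
            (m.choose ((Fintype.card G - k) / d) : ℝ))) := by
  classical
  set n := Fintype.card G with hn
  set I : Finset ℂ := Finset.univ.image ψ with hI
  set d := I.card with hd
  set m := #(univ.filter fun g => ψ g = (1 : ℂ)) with hm
  -- every element of I is nonzero
  have hInz : ∀ z ∈ I, z ≠ 0 := by
    intro z hz
    obtain ⟨a, _, rfl⟩ := Finset.mem_image.mp hz
    have := ψ.norm_apply a
    intro h; rw [h] at this; simp at this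
  -- n = d * m
  have hnm : n = d * m := by
    rw [hn, ← Finset.card_univ, Finset.card_eq_sum_card_fiberwise
      (f := fun g : G => ψ g) (t := I) (fun g _ => Finset.mem_image_of_mem ψ (mem_univ g))]
    rw [Finset.sum_congr rfl (fun z hz => ?_), Finset.sum_const, smul_eq_mul]
    obtain ⟨a, _, rfl⟩ := Finset.mem_image.mp hz
    exact my_fiber_card ψ a
  -- 2 ≤ d
  have hd2 : 2 ≤ d := by
    obtain ⟨a, ha⟩ := AddChar.ne_zero_iff.mp hψ
    have h1 : (1 : ℂ) ∈ I := by
      refine Finset.mem_image.mpr ⟨0, mem_univ 0, ψ.map_zero_eq_one⟩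
    have h2 : ψ a ∈ I := Finset.mem_image_of_mem ψ (mem_univ a)
    exact Finset.one_lt_card.mpr ⟨1, h1, ψ a, h2, fun h => ha h.symm⟩
  -- z ^ d = 1 for z ∈ I
  have hpow : ∀ z ∈ I, z ^ d = 1 := by
    intro z hz
    obtain ⟨a, _, rfl⟩ := Finset.mem_image.mp hz
    have hbij : ∏ w ∈ I, (ψ a * w) = ∏ w ∈ I, w := by
      apply Finset.prod_nbij' (fun w => ψ a * w) (fun w => (ψ a)⁻¹ * w)
      · intro w hw
        obtain ⟨b, _, rfl⟩ := Finset.mem_image.mp hw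
        exact Finset.mem_image.mpr ⟨a + b, mem_univ _, (ψ.map_add_eq_mul a b)⟩
      · intro w hw
        obtain ⟨b, _, rfl⟩ := Finset.mem_image.mp hw
        refine Finset.mem_image.mpr ⟨b - a, mem_univ _, ?_⟩
        rw [AddChar.map_sub_eq_div, div_eq_inv_mul]
      · intro w hw
        rw [← mul_assoc, inv_mul_cancel₀ (hInz _ (Finset.mem_image_of_mem ψ (mem_univ a))), one_mul]
      · intro w hw
        rw [← mul_assoc, mul_inv_cancel₀ (hInz _ (Finset.mem_image_of_mem ψ (mem_univ a))), one_mul]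
      · intro w hw; rfl
    rw [Finset.prod_mul_distrib, Finset.prod_const] at hbij
    have hPne : ∏ w ∈ I, w ≠ 0 := Finset.prod_ne_zero_iff.mpr hInz
    exact mul_right_cancel₀ hPne (by rw [hbij, one_mul])
  -- the roots polynomial identity
  have hd0 : d ≠ 0 := by omega
  have hroots : (X ^ d - C (1 : ℂ)).roots = I.val := by
    have hmonic := monic_X_pow_sub_C (1 : ℂ) hd0
    have hsub : I.val ≤ (X ^ d - C (1 : ℂ)).roots := by
      rw [Multiset.le_iff_subset I.nodup]
      intro z hz
      rw [Polynomial.mem_roots (hmonic.ne_zero)]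
      simp only [IsRoot, eval_sub, eval_pow, eval_X, eval_C]
      rw [hpow z hz]; ring
    refine (Multiset.eq_of_le_of_card_le hsub ?_).symm
    calc Multiset.card (X ^ d - C (1 : ℂ)).roots ≤ (X ^ d - C (1 : ℂ)).natDegree :=
          card_roots' _
    _ = d := natDegree_X_pow_sub_C
    _ = Multiset.card I.val := rfl
  have h1 : ∏ z ∈ I, (X - C z) = X ^ d - C (1 : ℂ) := by
    have := prod_multiset_X_sub_C_of_monic_of_roots_card_eq (monic_X_pow_sub_C (1 : ℂ) hd0)
      (by rw [hroots, natDegree_X_pow_sub_C]; rfl)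
    rw [hroots] at this
    rw [Finset.prod_eq_multiset_prod]
    exact this
  -- ∏ (X + C z) = X^d - C ((-1)^d)
  have h2 : ∏ z ∈ I, (X + C z) = X ^ d - C ((-1 : ℂ) ^ d) := by
    have hcomp := congrArg (fun p : ℂ[X] => p.comp (-X)) h1
    simp only [Polynomial.prod_comp, sub_comp, pow_comp, X_comp, C_comp] at hcomp
    have hL : ∏ z ∈ I, (-X - C z) = (-1 : ℂ[X]) ^ d * ∏ z ∈ I, (X + C z) := by
      rw [← Finset.prod_const (b := (-1 : ℂ[X])), ← Finset.prod_mul_distrib]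
      exact Finset.prod_congr rfl (fun z _ => by ring)
    rw [hL] at hcomp
    have hsq : (-1 : ℂ[X]) ^ d * (-1 : ℂ[X]) ^ d = 1 := by
      rw [← mul_pow]; norm_num
    have hC : (-1 : ℂ[X]) ^ d = C ((-1 : ℂ) ^ d) := by
      rw [← C_1, ← C_neg, ← C_pow]
    calc ∏ z ∈ I, (X + C z) = ((-1 : ℂ[X]) ^ d * (-1 : ℂ[X]) ^ d) * ∏ z ∈ I, (X + C z) := by
          rw [hsq, one_mul]
    _ = (-1 : ℂ[X]) ^ d * ((-1 : ℂ[X]) ^ d * ∏ z ∈ I, (X + C z)) := by rw [mul_assoc]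
    _ = (-1 : ℂ[X]) ^ d * ((-X) ^ d - C 1) := by rw [hcomp]
    _ = X ^ d - C ((-1 : ℂ) ^ d) := by
          have hX : (-X : ℂ[X]) ^ d = (-1 : ℂ[X]) ^ d * X ^ d := by
            rw [neg_pow]
          rw [hX, mul_sub, ← mul_assoc, hsq, one_mul, hC, ← C_mul, mul_one]
  -- the full product
  have hQ : ∏ g : G, (X + C (ψ g)) = (X ^ d - C ((-1 : ℂ) ^ d)) ^ m := by
    rw [← h2, ← Finset.prod_pow]
    rw [← Finset.prod_fiberwise_of_maps_to
      (fun g (_ : g ∈ univ) => Finset.mem_image_of_mem ψ (mem_univ g))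
      (fun g => X + C (ψ g))]
    apply Finset.prod_congr rfl
    intro z hz
    have hfib : ∀ g ∈ univ.filter fun g => ψ g = z, X + C (ψ g) = X + C z := by
      intro g hg
      rw [(Finset.mem_filter.mp hg).2]
    rw [Finset.prod_congr rfl hfib, Finset.prod_const]
    congr 1
    obtain ⟨a, _, rfl⟩ := Finset.mem_image.mp hz
    exact my_fiber_card ψ a
  -- Vieta
  have hE : ∑ S ∈ Finset.univ.powersetCard k, ∏ s ∈ S, ψ s =
      (∏ g : G, (X + C (ψ g))).coeff (n - k) := by
    rw [Finset.prod_X_add_C_coeff Finset.univ ψ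
      (by rw [Finset.card_univ]; exact Nat.sub_le _ _)]
    rw [Finset.card_univ, ← hn, Nat.sub_sub_self hk]
  refine ⟨d, m, hd2, hnm, ?_⟩
  rw [hE, hQ, sub_eq_add_neg, ← map_neg]
  rw [my_coeff_pow _ d m (n - k) (by omega)]
  by_cases hcase : d ∣ (n - k) ∧ (n - k) / d ≤ m
  · right
    refine ⟨hcase.1, ?_⟩
    rw [if_pos hcase]
    rw [norm_mul, norm_pow, norm_neg, norm_pow, norm_neg, norm_one, one_pow, one_pow, one_mul,
      Complex.norm_natCast]
  · by_cases hdvd : d ∣ (n - k)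
    · exfalso
      apply hcase
      refine ⟨hdvd, ?_⟩
      obtain ⟨q, hq⟩ := hdvd
      have h1 : (n - k) / d = q := by rw [hq]; exact Nat.mul_div_cancel_left q (by omega)
      have h2 : q ≤ m := Nat.le_of_mul_le_mul_left (by omega) (by omega : 0 < d)
      omega
    · left
      rw [if_neg hcase, norm_zero]



lemma my_minmax {α : Type} [Fintype α] [Nonempty α] (f : α → ℕ) :
    ∃ b₀ b₁, (⨅ b, f b) = f b₀ ∧ (⨆ b, f b) = f b₁ ∧ ∀ b, f b₀ ≤ f b ∧ f b ≤ f b₁ := by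
  obtain ⟨b₀, hb₀⟩ := Finite.exists_min f
  obtain ⟨b₁, hb₁⟩ := Finite.exists_max f
  refine ⟨b₀, b₁, ?_, ?_, fun b => ⟨hb₀ b, hb₁ b⟩⟩
  · exact le_antisymm (ciInf_le (OrderBot.bddBelow _) b₀) (le_ciInf hb₀)
  · exact le_antisymm (ciSup_le hb₁) (le_ciSup (Set.Finite.bddAbove (Set.finite_range f)) b₁)

variable {G : Type} [AddCommGroup G] [Fintype G] [DecidableEq G]

lemma my_addChar_map_sum' (ψ : AddChar G ℂ) (S : Finset G) :
    ψ (S.sum id) = ∏ s ∈ S, ψ s := by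
  induction S using Finset.cons_induction with
  | empty => simp
  | cons a S ha ih => rw [Finset.sum_cons, Finset.prod_cons, id_eq, AddChar.map_add_eq_mul, ih]

lemma my_fourier (k : ℕ) (b : G) :
    ((((Finset.univ.powersetCard k).filter (fun S : Finset G => S.sum id = b)).card : ℂ))
        * (Fintype.card G : ℂ) =
      ∑ ψ : AddChar G ℂ, ψ (-b) * ∑ S ∈ Finset.univ.powersetCard k, ∏ s ∈ S, ψ s := by
  classical
  have step : ∀ ψ : AddChar G ℂ, ψ (-b) * ∑ S ∈ Finset.univ.powersetCard k, ∏ s ∈ S, ψ s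
      = ∑ S ∈ Finset.univ.powersetCard k, ψ (S.sum id - b) := by
    intro ψ
    rw [Finset.mul_sum]
    refine Finset.sum_congr rfl (fun S _ => ?_)
    rw [sub_eq_add_neg, AddChar.map_add_eq_mul, my_addChar_map_sum']
    ring
  rw [Finset.sum_congr rfl (fun ψ _ => step ψ), Finset.sum_comm]
  have inner : ∀ S : Finset G, (∑ ψ : AddChar G ℂ, ψ (S.sum id - b))
      = if S.sum id = b then (Fintype.card G : ℂ) else 0 := by
    intro S
    rw [AddChar.sum_apply_eq_ite]
    congr 1
    simp [sub_eq_zero]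
  rw [Finset.sum_congr rfl (fun S _ => inner S), ← Finset.sum_filter, Finset.sum_const,
    nsmul_eq_mul]

lemma my_ratio {A B C eC nR ε : ℝ} (hC : 0 < C) (heC0 : 0 < eC) (h2eC : 2 * eC < ε * C)
    (hε : 0 < ε) (hAn : C - eC ≤ A * nR) (hBn : B * nR ≤ C + eC) (hCeC : 0 < C - eC)
    (hn : 0 < nR) (hAB : A ≤ B) : 1 - ε < A / B := by
  have hBnlow : C - eC ≤ B * nR :=
    le_trans hAn (mul_le_mul_of_nonneg_right hAB hn.le)
  have hBpos : 0 < B := by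
    by_contra hb
    push_neg at hb
    nlinarith
  rw [lt_div_iff₀ hBpos]
  have final : (1 - ε) * (B * nR) < A * nR := by
    rcases le_or_gt (1 - ε) 0 with hcase | hcase
    · have hApos : 0 < A * nR := lt_of_lt_of_le hCeC hAn
      have h1 : (1 - ε) * (B * nR) ≤ 0 :=
        mul_nonpos_of_nonpos_of_nonneg hcase (by positivity)
      linarith
    · calc (1 - ε) * (B * nR) ≤ (1 - ε) * (C + eC) :=
            mul_le_mul_of_nonneg_left hBn (le_of_lt hcase)
      _ < C - eC := by nlinarith [mul_pos hε heC0]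
      _ ≤ A * nR := hAn
  have h2 : ((1 - ε) * B) * nR < A * nR := by linarith
  have h3 : (1 - ε) * B < A := by
    by_contra hcon
    push_neg at hcon
    nlinarith
  exact h3

theorem stmt_11 :
    ∀ ε : ℝ, 0 < ε → ∃ N₀ : ℕ,
      ∀ (G : Type) [AddCommGroup G] [Fintype G] [DecidableEq G],
        N₀ ≤ Fintype.card G →
        ∀ k : ℕ, 4 ≤ k → k ≤ Fintype.card G / 2 + 1 →
          ((⨅ b : G, ((Finset.univ.powersetCard k).filter
              (fun S : Finset G => S.sum id = b)).card : ℕ) : ℝ) /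
            ((⨆ b : G, ((Finset.univ.powersetCard k).filter
              (fun S : Finset G => S.sum id = b)).card : ℕ) : ℝ) > 1 - ε := by
  intro ε hε
  set Tn : ℕ := ⌈(2:ℝ)/ε⌉₊ + 3 with hTdef
  refine ⟨8 * Tn + 100, ?_⟩
  intro G _ _ _ hcard k hk4 hk2
  classical
  set n := Fintype.card G with hn
  have hn0 : 0 < n := by omega
  have hne : Nonempty G := Fintype.card_pos_iff.mp hn0
  have hkn : k ≤ n := by omega
  have hchoose0 : (0:ℝ) < (n.choose k : ℝ) := by exact_mod_cast Nat.choose_pos hkn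
  have hTpos : (0:ℝ) < (Tn:ℝ) := by positivity
  -- per-character bound
  have hEb : ∀ ψ : AddChar G ℂ, ψ ≠ 0 →
      ‖∑ S ∈ Finset.univ.powersetCard k, ∏ s ∈ S, ψ s‖ ≤ (n.choose k : ℝ) / ((Tn:ℝ) * n) := by
    intro ψ hψ
    have hTn0 : (0:ℝ) < (Tn:ℝ) * n := by positivity
    rw [le_div_iff₀ hTn0]
    obtain ⟨d, m, hd2, hnm, hcases⟩ := my_E_eq ψ hψ k hkn
    rw [← hn] at hnm hcases
    rcases hcases with h0 | ⟨hdvd, heq⟩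
    · rw [h0, zero_mul]; positivity
    · have hdn : d ∣ n := ⟨m, hnm⟩
      have hnat := my_key_nat Tn n k d hcard hk4 hk2 hd2 hdn hdvd
      have hm : n / d = m := by rw [hnm]; exact Nat.mul_div_cancel_left m (by omega)
      rw [heq]
      calc (m.choose ((n - k) / d) : ℝ) * ((Tn:ℝ) * n)
          = ((Tn * n * Nat.choose (n / d) ((n - k) / d) : ℕ) : ℝ) := by
            rw [hm]; push_cast; ring
      _ ≤ ((n.choose k : ℕ) : ℝ) := by exact_mod_cast hnat
  -- key estimate for every b
  have hkey : ∀ b : G,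
      |((((Finset.univ.powersetCard k).filter
          (fun S : Finset G => S.sum id = b)).card : ℝ)) * (n:ℝ) - (n.choose k : ℝ)|
        ≤ (n.choose k : ℝ) / (Tn:ℝ) := by
    intro b
    have hfour := my_fourier (G := G) k b
    have hsplit := (Finset.add_sum_erase Finset.univ
      (fun ψ : AddChar G ℂ => ψ (-b) * ∑ S ∈ Finset.univ.powersetCard k, ∏ s ∈ S, ψ s)
      (Finset.mem_univ (0 : AddChar G ℂ))).symm
    have h0 : ((0 : AddChar G ℂ)) (-b)
        * (∑ S ∈ Finset.univ.powersetCard k, ∏ s ∈ S, (0 : AddChar G ℂ) s)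
        = ((n.choose k : ℕ) : ℂ) := by
      simp [Finset.card_powersetCard, Finset.card_univ, hn]
    have hdiff : ((((Finset.univ.powersetCard k).filter
          (fun S : Finset G => S.sum id = b)).card : ℂ)) * (n : ℂ) - ((n.choose k : ℕ) : ℂ)
        = ∑ ψ ∈ Finset.univ.erase (0 : AddChar G ℂ),
            ψ (-b) * ∑ S ∈ Finset.univ.powersetCard k, ∏ s ∈ S, ψ s := by
      rw [← hn] at hfour
      rw [hfour, hsplit, h0]
      ring
    have hcarderase : (Finset.univ.erase (0 : AddChar G ℂ)).card = n - 1 := by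
      rw [Finset.card_erase_of_mem (Finset.mem_univ _), Finset.card_univ, AddChar.card_eq]
    have hnorm : ‖∑ ψ ∈ Finset.univ.erase (0 : AddChar G ℂ),
        ψ (-b) * ∑ S ∈ Finset.univ.powersetCard k, ∏ s ∈ S, ψ s‖
          ≤ (n.choose k : ℝ) / (Tn:ℝ) := by
      calc ‖∑ ψ ∈ Finset.univ.erase (0 : AddChar G ℂ),
            ψ (-b) * ∑ S ∈ Finset.univ.powersetCard k, ∏ s ∈ S, ψ s‖
          ≤ ∑ ψ ∈ Finset.univ.erase (0 : AddChar G ℂ),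
            ‖ψ (-b) * ∑ S ∈ Finset.univ.powersetCard k, ∏ s ∈ S, ψ s‖ := norm_sum_le _ _
      _ ≤ ∑ _ψ ∈ Finset.univ.erase (0 : AddChar G ℂ), (n.choose k : ℝ) / ((Tn:ℝ) * n) := by
            refine Finset.sum_le_sum (fun ψ hψ => ?_)
            rw [norm_mul, ψ.norm_apply, one_mul]
            exact hEb ψ (Finset.mem_erase.mp hψ).1
      _ = ((n - 1 : ℕ) : ℝ) * ((n.choose k : ℝ) / ((Tn:ℝ) * n)) := by
            rw [Finset.sum_const, hcarderase, nsmul_eq_mul]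
      _ ≤ (n:ℝ) * ((n.choose k : ℝ) / ((Tn:ℝ) * n)) := by
            apply mul_le_mul_of_nonneg_right _ (by positivity)
            exact_mod_cast Nat.sub_le n 1
      _ = (n.choose k : ℝ) / (Tn:ℝ) := by
            field_simp
    have hcast : ((((((Finset.univ.powersetCard k).filter
          (fun S : Finset G => S.sum id = b)).card : ℝ)) * (n:ℝ) - (n.choose k : ℝ) : ℝ) : ℂ)
        = ((((Finset.univ.powersetCard k).filter
          (fun S : Finset G => S.sum id = b)).card : ℂ)) * (n : ℂ) - ((n.choose k : ℕ) : ℂ) := by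
      push_cast
      ring
    calc |((((Finset.univ.powersetCard k).filter
          (fun S : Finset G => S.sum id = b)).card : ℝ)) * (n:ℝ) - (n.choose k : ℝ)|
        = ‖((((((Finset.univ.powersetCard k).filter
          (fun S : Finset G => S.sum id = b)).card : ℝ)) * (n:ℝ) - (n.choose k : ℝ) : ℝ) : ℂ)‖ := by
          exact (Complex.norm_real _).symm
    _ = ‖∑ ψ ∈ Finset.univ.erase (0 : AddChar G ℂ),
            ψ (-b) * ∑ S ∈ Finset.univ.powersetCard k, ∏ s ∈ S, ψ s‖ := by rw [hcast, hdiff]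
    _ ≤ (n.choose k : ℝ) / (Tn:ℝ) := hnorm
  -- min and max
  obtain ⟨b₀, b₁, hinf, hsup, hmm⟩ := my_minmax (fun b : G =>
    ((Finset.univ.powersetCard k).filter (fun S : Finset G => S.sum id = b)).card)
  rw [hinf, hsup]
  have hnR : (0:ℝ) < (n:ℝ) := by exact_mod_cast hn0
  have heC0 : (0:ℝ) < (n.choose k : ℝ) / (Tn:ℝ) := by positivity
  have hceil : (2:ℝ)/ε < (Tn:ℝ) := by
    calc (2:ℝ)/ε ≤ (⌈(2:ℝ)/ε⌉₊ : ℝ) := Nat.le_ceil _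
    _ < (Tn:ℝ) := by rw [hTdef]; push_cast; linarith
  have h2T : 2 / (Tn:ℝ) < ε := by
    rw [div_lt_iff₀ hTpos]
    calc (2:ℝ) = ε * ((2:ℝ)/ε) := by field_simp
    _ < ε * (Tn:ℝ) := mul_lt_mul_of_pos_left hceil hε
    _ = ε * (Tn:ℝ) := rfl
  have h2eC : 2 * ((n.choose k : ℝ) / (Tn:ℝ)) < ε * (n.choose k : ℝ) := by
    calc 2 * ((n.choose k : ℝ) / (Tn:ℝ)) = (2 / (Tn:ℝ)) * (n.choose k : ℝ) := by ring
    _ < ε * (n.choose k : ℝ) := mul_lt_mul_of_pos_right h2T hchoose0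
  have hAn : (n.choose k : ℝ) - (n.choose k : ℝ) / (Tn:ℝ) ≤
      (((Finset.univ.powersetCard k).filter
        (fun S : Finset G => S.sum id = b₀)).card : ℝ) * (n:ℝ) := by
    have h1 := (abs_le.mp (hkey b₀)).1
    linarith
  have hBn : (((Finset.univ.powersetCard k).filter
        (fun S : Finset G => S.sum id = b₁)).card : ℝ) * (n:ℝ) ≤
      (n.choose k : ℝ) + (n.choose k : ℝ) / (Tn:ℝ) := by
    have h1 := (abs_le.mp (hkey b₁)).2
    linarith
  have hT3 : (3:ℝ) ≤ (Tn:ℝ) := by rw [hTdef]; push_cast; linarith [Nat.zero_le ⌈(2:ℝ)/ε⌉₊, Nat.cast_nonneg (α := ℝ) ⌈(2:ℝ)/ε⌉₊]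
  have hCeC : (0:ℝ) < (n.choose k : ℝ) - (n.choose k : ℝ) / (Tn:ℝ) := by
    have h1 : (n.choose k : ℝ) / (Tn:ℝ) ≤ (n.choose k : ℝ) / 3 :=
      div_le_div_of_nonneg_left (le_of_lt hchoose0) (by norm_num) hT3
    linarith
  have hAB : (((Finset.univ.powersetCard k).filter
        (fun S : Finset G => S.sum id = b₀)).card : ℝ) ≤
      (((Finset.univ.powersetCard k).filter
        (fun S : Finset G => S.sum id = b₁)).card : ℝ) := by
    exact_mod_cast (hmm b₀).2
  exact my_ratio hchoose0 heC0 h2eC hε hAn hBn hCeC hnR hAB
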